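/- Under the hypotheses of the main theorem (Σ positive definite, R a P-matrix, R⁻¹μ < 0), if the d-dimensional polynomial identity γ(θ) = Σ_{i=1}^d C_i γ_i(θ)(α_i - θ_i) holds for all θ ∈ ℝ^d with C_i > 0 and α > 0, then α_i = θ^{(i,r)}_i for every i. -/

import Mathlib

open Matrix

/-- A real square matrix is a P-matrix if every principal minor is positive. -/
def IsPMatrix {d : ℕ} (A : Matrix (Fin d) (Fin d) ℝ) : Prop :=
  ∀ s : Finset (Fin d),
    0 < (A.submatrix (fun i : s => (i : Fin d)) (fun j : s => (j : Fin d))).det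

theorem alpha_eq_theta_ray_coordinate {d : ℕ}
    (S : Matrix (Fin d) (Fin d) ℝ) (hS : S.PosDef)
    (μ : Fin d → ℝ) (R : Matrix (Fin d) (Fin d) ℝ)
    (hP : IsPMatrix R) (hRdet : IsUnit R.det)
    (hμ : ∀ i, (R⁻¹.mulVec μ) i < 0)
    (B : Fin d → Fin d → ℝ) (hB : ∀ i k, B i k = (R⁻¹)ᵀ k i)
    (Δ : Fin d → ℝ) (hΔ : ∀ i, Δ i = -2 * (μ ⬝ᵥ B i) / (B i ⬝ᵥ S.mulVec (B i)))
    (θr : Fin d → Fin d → ℝ) (hθr : ∀ i, θr i = Δ i • B i)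
    (C : Fin d → ℝ) (hC : ∀ i, 0 < C i)
    (α : Fin d → ℝ) (hα : ∀ i, 0 < α i)
    (hid : ∀ θ : Fin d → ℝ,
      -(1/2 : ℝ) * (θ ⬝ᵥ S.mulVec θ) - μ ⬝ᵥ θ
        = ∑ i : Fin d, C i * ((fun l => R l i) ⬝ᵥ θ) * (α i - θ i)) :
    ∀ i : Fin d, α i = θr i i := by
  intro i
  have hBi : ∀ k, B i k = R⁻¹ i k := by
    intro k; rw [hB]; rfl
  have hm : μ ⬝ᵥ B i = (R⁻¹.mulVec μ) i := by
    simp [Matrix.mulVec, dotProduct, hBi, mul_comm]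
  set m := μ ⬝ᵥ B i with hmdef
  have hmneg : m < 0 := by rw [hm]; exact hμ i
  have hBne : B i ≠ 0 := by
    intro h
    rw [hmdef, h] at hmneg
    simp [dotProduct] at hmneg
  have hq : 0 < B i ⬝ᵥ S.mulVec (B i) := by
    have := hS.dotProduct_mulVec_pos hBne
    simpa using this
  set q := B i ⬝ᵥ S.mulVec (B i) with hqdef
  have hΔi : Δ i = -2 * m / q := hΔ i
  have hΔq : Δ i * q = -2 * m := by
    rw [hΔi]; field_simp
  have hΔpos : 0 < Δ i := by
    rw [hΔi]; apply div_pos _ hq; linarith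
  have hkey := hid (θr i)
  -- LHS is zero
  have h1 : θr i ⬝ᵥ S.mulVec (θr i) = Δ i * (Δ i * q) := by
    rw [hθr]
    simp [Matrix.mulVec_smul, dotProduct_smul, smul_dotProduct,
      smul_eq_mul, hqdef]
  have h2 : μ ⬝ᵥ θr i = Δ i * m := by
    rw [hθr]
    simp [dotProduct_smul, smul_eq_mul, hmdef]
  have hLHS : -(1/2 : ℝ) * (θr i ⬝ᵥ S.mulVec (θr i)) - μ ⬝ᵥ θr i = 0 := by
    rw [h1, h2, hΔq]; ring
  -- each dot product on the RHS
  have hdot : ∀ k, (fun l => R l k) ⬝ᵥ θr i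
      = Δ i * (1 : Matrix (Fin d) (Fin d) ℝ) i k := by
    intro k
    rw [← Matrix.nonsing_inv_mul R hRdet, hθr]
    simp only [Matrix.mul_apply, dotProduct, Pi.smul_apply, smul_eq_mul,
      Finset.mul_sum]
    apply Finset.sum_congr rfl
    intro l _
    rw [hBi]; ring
  have hRHS : (∑ k : Fin d, C k * ((fun l => R l k) ⬝ᵥ θr i) * (α k - θr i k))
      = C i * Δ i * (α i - θr i i) := by
    rw [Finset.sum_eq_single i]
    · rw [hdot i, Matrix.one_apply_eq]; ring
    · intro k _ hk
      rw [hdot k, Matrix.one_apply_ne (Ne.symm hk)]; ring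
    · intro h; exact absurd (Finset.mem_univ i) h
  rw [hLHS, hRHS] at hkey
  have hCD : 0 < C i * Δ i := mul_pos (hC i) hΔpos
  nlinarith [hkey, hCD]
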